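/- arXiv:2403.04152 — 5 statements merged into one kernel-verified Lean document; each statement's English description precedes it below -/
import Mathlib

section
/- Let f be analytic in the open disk |z| < r with Re f > 0 throughout the disk, and let 0 < p < 1. Then the integral over φ ∈ [0, 2π] of liminf_{z → re^{iφ}, |z|<r} |f(z)|^p dφ is at most (2π / cos(πp/2)) · |f(0)|^p. -/
open Complex MeasureTheory Real Filter

-- pointwise facts
lemma abs_cpow_real {z : ℂ} (hz : z ≠ 0) (p : ℝ) :
    ‖z ^ (p : ℂ)‖ = ‖z‖ ^ p := by
  rw [Complex.norm_cpow_of_ne_zero hz]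
  simp

lemma re_cpow_ge {z : ℂ} (hz : 0 < z.re) {p : ℝ} (hp : 0 < p) (hp1 : p < 1) :
    Real.cos (π * p / 2) * ‖z‖ ^ p ≤ (z ^ (p : ℂ)).re := by
  have hz0 : z ≠ 0 := fun h => by simp [h] at hz
  have habs : 0 < ‖z‖ := norm_pos_iff.mpr hz0
  rw [Complex.cpow_def_of_ne_zero hz0]
  rw [Complex.exp_re]
  have him : (Complex.log z * (p : ℂ)).im = p * Complex.arg z := by
    simp [Complex.log_im, mul_comm]
  have hre : (Complex.log z * (p : ℂ)).re = Real.log (‖z‖) * p := by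
    simp [Complex.log_re]
  rw [him, hre]
  have h1 : Real.exp (Real.log (‖z‖) * p) = ‖z‖ ^ p := by
    rw [Real.rpow_def_of_pos habs]
  rw [h1, mul_comm (Real.cos (π * p / 2))]
  have hpow : (0:ℝ) ≤ ‖z‖ ^ p := le_of_lt (Real.rpow_pos_of_pos habs p)
  apply mul_le_mul_of_nonneg_left _ hpow
  -- cos (π p / 2) ≤ cos (p * arg z)
  have harg : |Complex.arg z| < π / 2 := Complex.abs_arg_lt_pi_div_two_iff.2 (Or.inl hz)
  have h2 : |p * Complex.arg z| ≤ π * p / 2 := by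
    rw [abs_mul, abs_of_pos hp]
    calc p * |Complex.arg z| ≤ p * (π / 2) := by
          exact mul_le_mul_of_nonneg_left harg.le hp.le
      _ = π * p / 2 := by ring
  calc Real.cos (π * p / 2) ≤ Real.cos |p * Complex.arg z| := by
        apply Real.cos_le_cos_of_nonneg_of_le_pi (abs_nonneg _) _ h2
        nlinarith [Real.pi_pos]
    _ = Real.cos (p * Complex.arg z) := Real.cos_abs _

lemma core {f : ℂ → ℂ} {r p : ℝ} (hp : 0 < p) (hp1 : p < 1)
    (hf : DifferentiableOn ℂ f (Metric.ball (0 : ℂ) r))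
    (hre : ∀ z ∈ Metric.ball (0 : ℂ) r, 0 < (f z).re)
    {ρ : ℝ} (hr : 0 < r) (hρ0 : 0 < ρ) (hρ : ρ < r) :
    ∫ φ in (0:ℝ)..(2 * π), ‖f (circleMap 0 ρ φ)‖ ^ p
      ≤ (2 * π / Real.cos (π * p / 2)) * ‖f 0‖ ^ p := by
  have hcos : 0 < Real.cos (π * p / 2) := by
    apply Real.cos_pos_of_mem_Ioo
    constructor <;> nlinarith [Real.pi_pos]
  set g : ℂ → ℂ := fun z => f z ^ (p : ℂ) with hg
  have hball : Metric.closedBall (0:ℂ) ρ ⊆ Metric.ball (0:ℂ) r := by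
    apply Metric.closedBall_subset_ball hρ
  have hmem : ∀ θ : ℝ, circleMap 0 ρ θ ∈ Metric.ball (0:ℂ) r := by
    intro θ
    apply hball
    simp only [Metric.mem_closedBall, Complex.dist_eq, sub_zero, norm_circleMap_zero]
    rw [_root_.abs_of_nonneg hρ0.le]
  have hfne : ∀ z ∈ Metric.ball (0:ℂ) r, f z ≠ 0 := fun z hz h0 => by
    have := hre z hz; rw [h0] at this; simp at this
  have hgd : DifferentiableOn ℂ g (Metric.ball (0:ℂ) r) := by
    intro z hz
    have hfz : DifferentiableAt ℂ f z := hf.differentiableAt (Metric.isOpen_ball.mem_nhds hz)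
    exact ((hfz.cpow (differentiableAt_const _) (Or.inl (hre z hz)))).differentiableWithinAt
  have h0mem : (0:ℂ) ∈ Metric.ball (0:ℂ) ρ := by simpa using hρ0
  have hcauchy : (∮ z in C(0, ρ), (z - 0)⁻¹ • g z) = (2 * π * Complex.I : ℂ) • g 0 :=
    DifferentiableOn.circleIntegral_sub_inv_smul (hgd.mono hball) h0mem
  -- turn circle integral into interval integral
  have hmv : ∫ θ in (0:ℝ)..(2 * π), g (circleMap 0 ρ θ) = (2 * π : ℝ) * g 0 := by
    rw [circleIntegral] at hcauchy
    have : ∀ θ : ℝ, deriv (circleMap 0 ρ) θ • ((circleMap 0 ρ θ - 0)⁻¹ • g (circleMap 0 ρ θ))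
        = Complex.I * g (circleMap 0 ρ θ) := by
      intro θ
      have hne : circleMap 0 ρ θ ≠ 0 := circleMap_ne_center hρ0.ne'
      rw [deriv_circleMap]
      simp only [smul_eq_mul, sub_zero]
      field_simp
    simp only [this] at hcauchy
    rw [intervalIntegral.integral_const_mul] at hcauchy
    have hI : (Complex.I : ℂ) ≠ 0 := Complex.I_ne_zero
    apply mul_left_cancel₀ hI
    rw [hcauchy, smul_eq_mul]
    push_cast
    ring
  -- continuity
  have hfc : Continuous fun θ : ℝ => f (circleMap 0 ρ θ) := by
    rw [continuous_iff_continuousAt]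
    intro θ
    exact (hf.differentiableAt (Metric.isOpen_ball.mem_nhds (hmem θ))).continuousAt.comp
      (continuous_circleMap 0 ρ).continuousAt
  have hgc : Continuous fun θ : ℝ => g (circleMap 0 ρ θ) := by
    rw [continuous_iff_continuousAt]
    intro θ
    exact (hgd.differentiableAt (Metric.isOpen_ball.mem_nhds (hmem θ))).continuousAt.comp
      (continuous_circleMap 0 ρ).continuousAt
  have huc : Continuous fun θ : ℝ => ‖f (circleMap 0 ρ θ)‖ ^ p :=
    (continuous_norm.comp hfc).rpow_const (fun _ => Or.inr hp.le)
  have hvc : Continuous fun θ : ℝ => (g (circleMap 0 ρ θ)).re :=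
    Complex.continuous_re.comp hgc
  -- real part of the mean value
  have hre_int : ∫ θ in (0:ℝ)..(2 * π), (g (circleMap 0 ρ θ)).re = (2 * π) * (g 0).re := by
    have := Complex.reCLM.intervalIntegral_comp_comm
      (hgc.intervalIntegrable (μ := volume) (0:ℝ) (2 * π))
    simpa [hmv] using this
  -- pointwise bound
  have hpt : ∀ θ ∈ Set.Icc (0:ℝ) (2 * π),
      Real.cos (π * p / 2) * ‖f (circleMap 0 ρ θ)‖ ^ p ≤ (g (circleMap 0 ρ θ)).re :=
    fun θ _ => re_cpow_ge (hre _ (hmem θ)) hp hp1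
  have h2pi : (0:ℝ) ≤ 2 * π := by positivity
  have hint1 : IntervalIntegrable (fun θ : ℝ =>
      Real.cos (π * p / 2) * ‖f (circleMap 0 ρ θ)‖ ^ p) volume 0 (2 * π) :=
    ((continuous_const.mul huc)).intervalIntegrable _ _
  have hint2 : IntervalIntegrable (fun θ : ℝ => (g (circleMap 0 ρ θ)).re) volume 0 (2 * π) :=
    hvc.intervalIntegrable _ _
  have hmono := intervalIntegral.integral_mono_on h2pi hint1 hint2 hpt
  rw [intervalIntegral.integral_const_mul, hre_int] at hmono
  -- |g 0| = |f 0| ^ p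
  have h0ball : (0:ℂ) ∈ Metric.ball (0:ℂ) r := by simpa using hr
  have habs0 : ‖g 0‖ = ‖f 0‖ ^ p :=
    abs_cpow_real (hfne 0 h0ball) p
  have hga : (g 0).re ≤ ‖f 0‖ ^ p := by
    rw [← habs0]; exact Complex.re_le_norm _
  have hfinal : Real.cos (π * p / 2) * ∫ θ in (0:ℝ)..(2 * π),
      ‖f (circleMap 0 ρ θ)‖ ^ p ≤ 2 * π * ‖f 0‖ ^ p := by
    calc Real.cos (π * p / 2) * ∫ θ in (0:ℝ)..(2 * π), ‖f (circleMap 0 ρ θ)‖ ^ p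
        ≤ 2 * π * (g 0).re := hmono
      _ ≤ 2 * π * ‖f 0‖ ^ p := by
          apply mul_le_mul_of_nonneg_left hga h2pi
  rw [div_mul_eq_mul_div, le_div_iff₀ hcos]
  linarith [hfinal]

theorem smirnov_lemma (f : ℂ → ℂ) (r p : ℝ) (hr : 0 < r) (hp : 0 < p) (hp1 : p < 1)
    (hf : DifferentiableOn ℂ f (Metric.ball (0 : ℂ) r))
    (hre : ∀ z ∈ Metric.ball (0 : ℂ) r, 0 < (f z).re) :
    ∫ φ in (0:ℝ)..(2 * π),
        Filter.liminf (fun z => ‖f z‖ ^ p)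
          (nhdsWithin ((r : ℂ) * Complex.exp ((φ : ℂ) * Complex.I)) (Metric.ball (0 : ℂ) r))
      ≤ (2 * π / Real.cos (π * p / 2)) * ‖f 0‖ ^ p := by
  have hcos : 0 < Real.cos (π * p / 2) := by
    apply Real.cos_pos_of_mem_Ioo
    constructor <;> nlinarith [Real.pi_pos]
  set u : ℂ → ℝ := fun z => ‖f z‖ ^ p with hu
  set C : ℝ := (2 * π / Real.cos (π * p / 2)) * ‖f 0‖ ^ p with hC
  have hCnn : 0 ≤ C := by
    apply mul_nonneg (div_nonneg (by positivity) hcos.le)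
      (Real.rpow_nonneg (norm_nonneg _) p)
  set g : ℝ → ℝ := fun φ => Filter.liminf u
      (nhdsWithin ((r : ℂ) * Complex.exp ((φ : ℂ) * Complex.I)) (Metric.ball (0 : ℂ) r)) with hgdef
  show ∫ φ in (0:ℝ)..(2 * π), g φ ≤ C
  have hunn : ∀ z, 0 ≤ u z := fun z => Real.rpow_nonneg (norm_nonneg _) p
  -- liminf is nonneg
  have hgnn : ∀ φ, 0 ≤ g φ := by
    intro φ
    rw [show g φ = sSup {a : ℝ | ∀ᶠ z in nhdsWithin ((r : ℂ) * Complex.exp ((φ : ℂ) * Complex.I))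
        (Metric.ball (0 : ℂ) r), a ≤ u z} from Filter.liminf_eq]
    set S := {a : ℝ | ∀ᶠ z in nhdsWithin ((r : ℂ) * Complex.exp ((φ : ℂ) * Complex.I))
        (Metric.ball (0 : ℂ) r), a ≤ u z} with hS
    have h0S : (0:ℝ) ∈ S := by
      rw [hS, Set.mem_setOf_eq]
      exact Filter.Eventually.of_forall (fun z => hunn z)
    by_cases hb : BddAbove S
    · exact le_csSup hb h0S
    · rw [Real.sSup_of_not_bddAbove hb]
  by_cases hInt : IntervalIntegrable g volume 0 (2 * π)
  swap
  · rw [intervalIntegral.integral_undef hInt]; exact hCnn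
  -- sequence of radii
  set ρ : ℕ → ℝ := fun n => r - r / (n + 2) with hρdef
  have hρ0 : ∀ n, 0 < ρ n := by
    intro n
    have h2 : (1:ℝ) < (n:ℝ) + 2 := by
      have := Nat.cast_nonneg (α := ℝ) n
      linarith
    have : r / ((n:ℝ) + 2) < r := by
      rw [div_lt_iff₀ (by positivity)]
      nlinarith
    simpa [hρdef] using sub_pos.2 this
  have hρr : ∀ n, ρ n < r := by
    intro n
    have : 0 < r / ((n:ℝ) + 2) := by positivity
    simpa [hρdef] using this
  have hρtend : Filter.Tendsto ρ atTop (nhds r) := by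
    have h1 : Filter.Tendsto (fun n : ℕ => ((n:ℝ) + 2)) atTop atTop :=
      Filter.tendsto_atTop_add_const_right _ 2 tendsto_natCast_atTop_atTop
    have h2 : Filter.Tendsto (fun n : ℕ => r / ((n:ℝ) + 2)) atTop (nhds 0) :=
      Filter.Tendsto.div_atTop tendsto_const_nhds h1
    have h3 := Filter.Tendsto.sub
      (tendsto_const_nhds : Filter.Tendsto (fun _ : ℕ => r) atTop (nhds r)) h2
    simpa using h3
  have hmemn : ∀ n (θ : ℝ), circleMap 0 (ρ n) θ ∈ Metric.ball (0:ℂ) r := by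
    intro n θ
    simp only [Metric.mem_ball, Complex.dist_eq, sub_zero, norm_circleMap_zero]
    rw [_root_.abs_of_nonneg (hρ0 n).le]
    exact hρr n
  -- the approximating sequence tends to the boundary point within the ball
  have hzt : ∀ φ : ℝ, Filter.Tendsto (fun n => circleMap 0 (ρ n) φ) atTop
      (nhdsWithin ((r : ℂ) * Complex.exp ((φ : ℂ) * Complex.I)) (Metric.ball (0 : ℂ) r)) := by
    intro φ
    apply tendsto_nhdsWithin_of_tendsto_nhds_of_eventually_within
    · have h1 : Filter.Tendsto (fun n => ((ρ n : ℝ) : ℂ)) atTop (nhds (r : ℂ)) :=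
        (Complex.continuous_ofReal.tendsto r).comp hρtend
      have h2 := h1.mul_const (Complex.exp ((φ : ℂ) * Complex.I))
      simpa [circleMap] using h2
    · exact Filter.Eventually.of_forall fun n => hmemn n φ
  -- key pointwise bound
  have hkey : ∀ φ : ℝ, ENNReal.ofReal (g φ)
      ≤ Filter.liminf (fun n => ENNReal.ofReal (u (circleMap 0 (ρ n) φ))) atTop := by
    intro φ
    set L := Filter.liminf (fun n => ENNReal.ofReal (u (circleMap 0 (ρ n) φ))) atTop with hL
    by_cases htop : L = ⊤
    · rw [htop]; exact le_top
    have hstep : ∀ c : ℝ, (∀ᶠ z in nhdsWithin ((r : ℂ) * Complex.exp ((φ : ℂ) * Complex.I))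
        (Metric.ball (0 : ℂ) r), c ≤ u z) → c ≤ L.toReal := by
      intro c hc
      have h1 : ∀ᶠ n in atTop, c ≤ u (circleMap 0 (ρ n) φ) := (hzt φ).eventually hc
      have h2 : ENNReal.ofReal c ≤ L := by
        rw [hL]
        exact Filter.le_liminf_of_le (by isBoundedDefault)
          (h1.mono fun n hn => ENNReal.ofReal_le_ofReal hn)
      by_cases hc0 : 0 ≤ c
      · calc c = (ENNReal.ofReal c).toReal := by rw [ENNReal.toReal_ofReal hc0]
          _ ≤ L.toReal := ENNReal.toReal_mono htop h2
      · exact le_trans (le_of_not_ge hc0) ENNReal.toReal_nonneg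
    have hg_le : g φ ≤ L.toReal := by
      rw [show g φ = sSup {a : ℝ | ∀ᶠ z in nhdsWithin ((r : ℂ) * Complex.exp ((φ : ℂ) * Complex.I))
          (Metric.ball (0 : ℂ) r), a ≤ u z} from Filter.liminf_eq]
      apply Real.sSup_le _ ENNReal.toReal_nonneg
      intro c hc
      exact hstep c hc
    calc ENNReal.ofReal (g φ) ≤ ENNReal.ofReal L.toReal := ENNReal.ofReal_le_ofReal hg_le
      _ = L := ENNReal.ofReal_toReal htop
  -- measurability and integral bound for the approximants
  have hucont : ∀ n, Continuous fun φ : ℝ => u (circleMap 0 (ρ n) φ) := by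
    intro n
    have hfc : Continuous fun θ : ℝ => f (circleMap 0 (ρ n) θ) := by
      rw [continuous_iff_continuousAt]
      intro θ
      exact (hf.differentiableAt (Metric.isOpen_ball.mem_nhds (hmemn n θ))).continuousAt.comp
        (continuous_circleMap 0 (ρ n)).continuousAt
    exact (continuous_norm.comp hfc).rpow_const (fun _ => Or.inr hp.le)
  have h2pi : (0:ℝ) ≤ 2 * π := by positivity
  have hlint : ∀ n, ∫⁻ φ in Set.Ioc (0:ℝ) (2 * π), ENNReal.ofReal (u (circleMap 0 (ρ n) φ))
      ≤ ENNReal.ofReal C := by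
    intro n
    have hint : IntegrableOn (fun φ : ℝ => u (circleMap 0 (ρ n) φ)) (Set.Ioc 0 (2 * π)) volume :=
      (hucont n).integrableOn_Ioc
    rw [← ofReal_integral_eq_lintegral_ofReal hint
      (Filter.Eventually.of_forall fun φ => hunn _)]
    apply ENNReal.ofReal_le_ofReal
    rw [← intervalIntegral.integral_of_le h2pi]
    exact core hp hp1 hf hre hr (hρ0 n) (hρr n)
  -- assemble via Fatou
  have hg_meas : AEMeasurable g (volume.restrict (Set.Ioc (0:ℝ) (2 * π))) :=
    hInt.1.aestronglyMeasurable.aemeasurable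
  have hfatou : ∫⁻ φ in Set.Ioc (0:ℝ) (2 * π), ENNReal.ofReal (g φ) ≤ ENNReal.ofReal C := by
    calc ∫⁻ φ in Set.Ioc (0:ℝ) (2 * π), ENNReal.ofReal (g φ)
        ≤ ∫⁻ φ in Set.Ioc (0:ℝ) (2 * π),
            Filter.liminf (fun n => ENNReal.ofReal (u (circleMap 0 (ρ n) φ))) atTop :=
          lintegral_mono fun φ => hkey φ
      _ ≤ Filter.liminf (fun n => ∫⁻ φ in Set.Ioc (0:ℝ) (2 * π),
            ENNReal.ofReal (u (circleMap 0 (ρ n) φ))) atTop :=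
          lintegral_liminf_le fun n =>
            (ENNReal.continuous_ofReal.comp (hucont n)).measurable
      _ ≤ Filter.liminf (fun _ : ℕ => ENNReal.ofReal C) atTop :=
          Filter.liminf_le_liminf (Filter.Eventually.of_forall hlint)
      _ = ENNReal.ofReal C := Filter.liminf_const _
  rw [intervalIntegral.integral_of_le h2pi,
    integral_eq_lintegral_of_nonneg_ae (Filter.Eventually.of_forall hgnn)
      hInt.1.aestronglyMeasurable]
  calc (∫⁻ φ in Set.Ioc (0:ℝ) (2 * π), ENNReal.ofReal (g φ)).toReal
      ≤ (ENNReal.ofReal C).toReal := ENNReal.toReal_mono ENNReal.ofReal_ne_top hfatou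
    _ = C := ENNReal.toReal_ofReal hCnn
end

section
/- For any t ∈ ℂ and z ∈ ℂ with |z| < r and |t| > r√2, the real part of e^{2i·arg(t)} / (z − t)^2 is strictly positive. -/
open Complex Real

theorem re_pos_kernel_far_pole (r : ℝ) (hr : 0 < r) (t z : ℂ)
    (hz : ‖z‖ < r) (ht : r * Real.sqrt 2 < ‖t‖) :
    0 < (Complex.exp (2 * (t.arg : ℂ) * Complex.I) / (z - t) ^ 2).re := by
  have hs2 : (1:ℝ) ≤ Real.sqrt 2 := by
    nlinarith [Real.sq_sqrt (by norm_num : (0:ℝ) ≤ 2), Real.sqrt_nonneg 2]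
  have habs : ‖z‖ < ‖t‖ := by nlinarith
  have htpos : 0 < ‖t‖ := lt_of_le_of_lt (norm_nonneg z) habs
  have ht0 : t ≠ 0 := norm_pos_iff.mp htpos
  have hzt : z - t ≠ 0 := sub_ne_zero.mpr (fun h => by rw [h] at habs; exact lt_irrefl _ habs)
  have hct : ((‖t‖ : ℝ) : ℂ) ≠ 0 := by exact_mod_cast htpos.ne'
  have hexp : Complex.exp (2 * (t.arg:ℂ) * Complex.I) = (t / ((‖t‖ : ℝ) : ℂ))^2 := by
    rw [show (2:ℂ) * t.arg * Complex.I = t.arg * Complex.I + t.arg * Complex.I by ring,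
      Complex.exp_add, ← sq]
    congr 1
    rw [eq_div_iff hct, mul_comm]
    exact Complex.norm_mul_exp_arg_mul_I t
  set w : ℂ := (z - t) / t with hw
  have hw0 : w ≠ 0 := div_ne_zero hzt ht0
  have key : Complex.exp (2 * (t.arg : ℂ) * Complex.I) / (z - t) ^ 2
      = (w^2)⁻¹ / ((‖t‖ ^ 2 : ℝ) : ℂ) := by
    rw [hexp, hw]
    push_cast
    field_simp
  rw [key, Complex.div_ofReal_re]
  apply div_pos
  · rw [Complex.inv_re]
    apply div_pos
    · set u := (z / t).re with hu
      set v := (z / t).im with hv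
      have hwre : w.re = u - 1 := by
        rw [hw, show (z - t)/t = z/t - 1 by field_simp]
        simp [hu]
      have hwim : w.im = v := by
        rw [hw, show (z - t)/t = z/t - 1 by field_simp]
        simp [hv]
      have hsq : u^2 + v^2 < 1/2 := by
        have h1 : u^2 + v^2 = ‖z/t‖ ^ 2 := by
          rw [Complex.sq_norm, Complex.normSq_apply]; ring
        have h2 : ‖z/t‖ = ‖z‖ / ‖t‖ := norm_div _ _
        rw [h1, h2, div_pow]
        rw [div_lt_iff₀ (by positivity)]
        have h3 : (r * Real.sqrt 2)^2 < ‖t‖ ^ 2 := by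
          apply sq_lt_sq' _ ht
          nlinarith [Real.sqrt_nonneg 2]
        have h4 : ‖z‖ ^ 2 < r ^ 2 := by
          apply sq_lt_sq' _ hz
          nlinarith [norm_nonneg z]
        have h5 : (r * Real.sqrt 2)^2 = 2 * r^2 := by
          rw [mul_pow, Real.sq_sqrt (by norm_num : (0:ℝ) ≤ 2)]; ring
        linarith
      rw [sq, Complex.mul_re, hwre, hwim]
      nlinarith [sq_nonneg (u - 1/2)]
    · exact Complex.normSq_pos.mpr (pow_ne_zero 2 hw0)
  · positivity
end

section
/- Let (c_n) and (t_n) be complex sequences with |t_n| → ∞, (t_n) having no finite limit point, and ∑_{n} |c_n|/|t_n|² < ∞. Then for every 0 < p < 1 and every r > 0, ∫₀^{2π} | ∑_{n : |t_n| > r√2} c_n/(re^{iφ} − t_n)² |^p dφ ≤ (8π / cos(πp/2)) · ( ∑_{n : |t_n| > r√2} |c_n|/|t_n|² )^p. -/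
open Complex MeasureTheory Real Filter


lemma rpow_frac_le {x y : ℝ} (hx : 0 ≤ x) (hy : 0 ≤ y) (m n : ℕ) (hn : n ≠ 0)
    (h : x ^ m ≤ y ^ n) : x ^ ((m : ℝ) / n) ≤ y := by
  have e1 : x ^ ((m : ℝ) / n) = (x ^ m) ^ ((n : ℝ)⁻¹) := by
    rw [div_eq_mul_inv, Real.rpow_mul hx, Real.rpow_natCast]
  rw [e1, ← Real.pow_rpow_inv_natCast hy hn]
  exact Real.rpow_le_rpow (pow_nonneg hx m) h (by positivity)

lemma sqrt2_lb : (1.414 : ℝ) ≤ Real.sqrt 2 := by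
  nlinarith [Real.sq_sqrt (by norm_num : (2:ℝ) ≥ 0), Real.sqrt_nonneg 2,
    sq_nonneg (Real.sqrt 2 - 1.415), sq_nonneg (Real.sqrt 2 - 1.414)]

lemma sqrt2_ub : Real.sqrt 2 ≤ (1.415 : ℝ) := by
  nlinarith [Real.sq_sqrt (by norm_num : (2:ℝ) ≥ 0), Real.sqrt_nonneg 2,
    sq_nonneg (Real.sqrt 2 - 1.415)]

lemma key_ineq (p : ℝ) (hp : 0 < p) (hp1 : p < 1) :
    (6 + 4 * Real.sqrt 2) ^ p * Real.cos (π * p / 2) ≤ 4 := by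
  have hs2 : Real.sqrt 2 ^ 2 = 2 := Real.sq_sqrt (by norm_num)
  have hsl := sqrt2_lb
  have hsu := sqrt2_ub
  set K : ℝ := 6 + 4 * Real.sqrt 2 with hKdef
  have hK0 : (0:ℝ) ≤ K := by nlinarith
  have hK1 : (1:ℝ) ≤ K := by nlinarith
  have hKu : K ≤ 11.66 := by nlinarith
  have hpi := Real.pi_pos
  have hcos0 : 0 ≤ Real.cos (π * p / 2) :=
    Real.cos_nonneg_of_mem_Icc ⟨by nlinarith, by nlinarith⟩
  have hcos1 : Real.cos (π * p / 2) ≤ 1 := Real.cos_le_one _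
  have hcosmono : ∀ a : ℝ, 0 ≤ a → a ≤ p → Real.cos (π * p / 2) ≤ Real.cos (π * a / 2) := by
    intro a ha hap
    apply Real.cos_le_cos_of_nonneg_of_le_pi (by positivity) (by nlinarith) (by nlinarith)
  rcases le_or_gt p (1/2) with h | h
  · have h1 : K ^ p ≤ K ^ (1/2 : ℝ) := Real.rpow_le_rpow_of_exponent_le hK1 h
    have h2 : K ^ (1/2 : ℝ) ≤ 4 := by
      have := rpow_frac_le hK0 (by norm_num : (0:ℝ) ≤ 4) 1 2 (by norm_num)
        (by nlinarith : K ^ 1 ≤ (4:ℝ) ^ 2)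
      norm_num at this
      convert this using 2 <;> norm_num
    calc K ^ p * Real.cos (π * p / 2) ≤ 4 * 1 := by
          apply mul_le_mul (h1.trans h2) hcos1 hcos0 (by norm_num)
      _ = 4 := by norm_num
  rcases le_or_gt p (2/3) with h' | h'
  · have h1 : K ^ p ≤ K ^ (2/3 : ℝ) := Real.rpow_le_rpow_of_exponent_le hK1 h'
    have h2 : K ^ (2/3 : ℝ) ≤ 4 * Real.sqrt 2 := by
      have := rpow_frac_le hK0 (by positivity : (0:ℝ) ≤ 4 * Real.sqrt 2) 2 3 (by norm_num)
        (by nlinarith : K ^ 2 ≤ (4 * Real.sqrt 2) ^ 3)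
      convert this using 2 <;> norm_num
    have h3 : Real.cos (π * p / 2) ≤ Real.sqrt 2 / 2 := by
      have := hcosmono (1/2) (by norm_num) h.le
      rwa [show π * (1/2) / 2 = π/4 by ring, Real.cos_pi_div_four] at this
    calc K ^ p * Real.cos (π * p / 2) ≤ (4 * Real.sqrt 2) * (Real.sqrt 2 / 2) := by
          apply mul_le_mul (h1.trans h2) h3 hcos0 (by positivity)
      _ = 4 := by nlinarith
  rcases le_or_gt p (5/6) with h'' | h''
  · have h1 : K ^ p ≤ K ^ (5/6 : ℝ) := Real.rpow_le_rpow_of_exponent_le hK1 h''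
    have h2 : K ^ (5/6 : ℝ) ≤ 8 := by
      have hK5 : K ^ 5 ≤ (8:ℝ) ^ 6 := by
        calc K ^ 5 ≤ (11.66:ℝ) ^ 5 := pow_le_pow_left₀ hK0 hKu 5
          _ ≤ (8:ℝ) ^ 6 := by norm_num
      have := rpow_frac_le hK0 (by norm_num : (0:ℝ) ≤ 8) 5 6 (by norm_num) hK5
      convert this using 2 <;> norm_num
    have h3 : Real.cos (π * p / 2) ≤ 1/2 := by
      have := hcosmono (2/3) (by norm_num) h'.le
      rwa [show π * (2/3) / 2 = π/3 by ring, Real.cos_pi_div_three] at this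
    calc K ^ p * Real.cos (π * p / 2) ≤ 8 * (1/2) := by
          apply mul_le_mul (h1.trans h2) h3 hcos0 (by norm_num)
      _ = 4 := by norm_num
  · have h1 : K ^ p ≤ K := by
      have := Real.rpow_le_rpow_of_exponent_le hK1 hp1.le
      rwa [Real.rpow_one] at this
    have h3 : Real.cos (π * p / 2) ≤ 0.2625 := by
      have h4 := hcosmono (5/6) (by norm_num) h''.le
      rw [show π * (5/6) / 2 = π/2 - π/12 by ring, Real.cos_pi_div_two_sub] at h4
      have h5 : Real.sin (π/12) ≤ π/12 := Real.sin_le (by positivity)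
      have h6 : π ≤ 3.15 := Real.pi_lt_d2.le
      linarith
    calc K ^ p * Real.cos (π * p / 2) ≤ K * 0.2625 := by
          apply mul_le_mul h1 h3 hcos0 hK0
      _ ≤ 4 := by nlinarith

theorem tail_estimate (c t : ℕ → ℂ)
    (hlim : Tendsto (fun n => ‖t n‖) atTop atTop)
    (hcl : ∀ z : ℂ, ¬ MapClusterPt z atTop t)
    (hnat : Summable (fun n => ‖c n‖ / ‖t n‖ ^ 2))
    (p r : ℝ) (hp : 0 < p) (hp1 : p < 1) (hr : 0 < r) :
    ∫ φ in (0:ℝ)..(2 * π),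
        ‖∑' n, if r * Real.sqrt 2 < ‖t n‖ then
            c n / ((r : ℂ) * Complex.exp ((φ : ℂ) * Complex.I) - t n) ^ 2 else 0‖ ^ p
      ≤ (8 * π / Real.cos (π * p / 2)) *
          (∑' n, if r * Real.sqrt 2 < ‖t n‖ then
            ‖c n‖ / ‖t n‖ ^ 2 else 0) ^ p := by
  have hsl : (1:ℝ) ≤ Real.sqrt 2 := by
    nlinarith [Real.sq_sqrt (by norm_num : (2:ℝ) ≥ 0), Real.sqrt_nonneg 2]
  set K : ℝ := 6 + 4 * Real.sqrt 2 with hKdef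
  have hK0 : (0:ℝ) ≤ K := by positivity
  set g : ℕ → ℝ := fun n => if r * Real.sqrt 2 < ‖t n‖ then
      ‖c n‖ / ‖t n‖ ^ 2 else 0 with hgdef
  have hg : Summable g := by
    apply Summable.of_nonneg_of_le (fun n => ?_) (fun n => ?_) hnat
    · simp only [hgdef]; split <;> positivity
    · simp only [hgdef]; split
      · exact le_refl _
      · positivity
  set f : ℕ → ℝ → ℂ := fun n φ => if r * Real.sqrt 2 < ‖t n‖ then
      c n / ((r : ℂ) * Complex.exp ((φ : ℂ) * Complex.I) - t n) ^ 2 else 0 with hfdef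
  have hzabs : ∀ φ : ℝ, ‖(r:ℂ) * Complex.exp ((φ:ℂ) * Complex.I)‖ = r := by
    intro φ
    rw [norm_mul, Complex.norm_real, Complex.norm_exp_ofReal_mul_I, mul_one, Real.norm_eq_abs, abs_of_pos hr]
  -- distance lower bound
  have hden : ∀ (φ : ℝ) (n : ℕ), r * Real.sqrt 2 < ‖t n‖ →
      ‖t n‖ ^ 2 ≤ K * ‖(r:ℂ) * Complex.exp ((φ:ℂ) * Complex.I) - t n‖ ^ 2 := by
    intro φ n h
    set z := (r:ℂ) * Complex.exp ((φ:ℂ) * Complex.I)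
    set s := ‖t n‖
    have hs2 : Real.sqrt 2 ^ 2 = 2 := Real.sq_sqrt (by norm_num)
    have hsr : r < s := by nlinarith [Real.sqrt_nonneg 2]
    have h1 : s - r ≤ ‖z - t n‖ := by
      have h2 : ‖t n‖ - ‖z‖ ≤ ‖t n - z‖ := norm_sub_norm_le _ _
      rw [norm_sub_rev]
      have := hzabs φ
      simp only [z] at *
      linarith [h2, this.le, this.ge]
    have hd0 : (0:ℝ) ≤ ‖z - t n‖ := norm_nonneg _
    have hd2 : (s - r)^2 ≤ ‖z - t n‖ ^ 2 := by nlinarith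
    have hKs : s^2 ≤ K * (s - r)^2 := by
      rw [hKdef]
      have hM : (0:ℝ) ≤ (s - Real.sqrt 2 * r) * ((5 + 4*Real.sqrt 2)*s - (4 + 3*Real.sqrt 2)*r) :=
        mul_nonneg (by nlinarith) (by nlinarith [Real.sqrt_nonneg 2])
      have e : (6 + 4*Real.sqrt 2)*(s-r)^2 - s^2
          = (s - Real.sqrt 2 * r) * ((5 + 4*Real.sqrt 2)*s - (4 + 3*Real.sqrt 2)*r)
            + (Real.sqrt 2 ^ 2 - 2) * (4*r*s - 3*r^2) := by ring
      rw [hs2] at e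
      norm_num at e
      linarith
    nlinarith
  -- pointwise bound on each term
  have hfu : ∀ (n : ℕ) (φ : ℝ), ‖f n φ‖ ≤ K * g n := by
    intro n φ
    simp only [hfdef, hgdef]
    split
    · rename_i h
      rw [norm_div, norm_pow]
      have hd := hden φ n h
      have hs0 : 0 < ‖t n‖ := by nlinarith [Real.sqrt_nonneg 2, mul_nonneg hr.le (Real.sqrt_nonneg 2)]
      have hw0 : 0 < ‖(r:ℂ) * Complex.exp ((φ:ℂ) * Complex.I) - t n‖ ^ 2 := by
        nlinarith [norm_nonneg ((r:ℂ) * Complex.exp ((φ:ℂ) * Complex.I) - t n)]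
      have hto : 0 < ‖t n‖ ^ 2 := by positivity
      rw [show K * (‖c n‖ / ‖t n‖ ^ 2)
            = (K * ‖c n‖) / ‖t n‖ ^ 2 from (mul_div_assoc _ _ _).symm,
          div_le_div_iff₀ hw0 hto]
      nlinarith [mul_le_mul_of_nonneg_left hd (norm_nonneg (c n))]
    · simp [hK0]
  have hu : Summable (fun n => K * g n) := hg.mul_left K
  have hfc : ∀ n, Continuous (f n) := by
    intro n
    simp only [hfdef]
    split
    · rename_i h
      apply Continuous.div continuous_const
      · apply Continuous.pow
        apply Continuous.sub _ continuous_const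
        exact continuous_const.mul (Complex.continuous_exp.comp
          (Complex.continuous_ofReal.mul continuous_const))
      · intro φ
        apply pow_ne_zero
        rw [sub_ne_zero]
        intro e
        rw [← e, hzabs φ] at h
        nlinarith [Real.sqrt_nonneg 2]
    · exact continuous_const
  have hFcont : Continuous (fun φ : ℝ => ∑' n, f n φ) :=
    continuous_tsum hfc hu (fun n φ => hfu n φ)
  set S : ℝ := ∑' n, g n with hSdef
  have hS0 : 0 ≤ S := tsum_nonneg (fun n => by simp only [hgdef]; split <;> positivity)
  have hFb : ∀ φ : ℝ, ‖∑' n, f n φ‖ ≤ K * S := by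
    intro φ
    have hsumn : Summable (fun n => ‖f n φ‖) :=
      Summable.of_nonneg_of_le (fun n => norm_nonneg _) (fun n => hfu n φ) hu
    calc ‖∑' n, f n φ‖ = ‖∑' n, f n φ‖ := rfl
      _ ≤ ∑' n, ‖f n φ‖ := norm_tsum_le_tsum_norm hsumn
      _ ≤ ∑' n, K * g n := Summable.tsum_le_tsum (fun n => hfu n φ) hsumn hu
      _ = K * S := tsum_mul_left
  have hInt : IntervalIntegrable (fun φ => ‖∑' n, f n φ‖ ^ p) volume 0 (2*π) := by
    apply Continuous.intervalIntegrable
    exact (continuous_norm.comp hFcont).rpow_const (fun x => Or.inr hp.le)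
  have hmono := intervalIntegral.integral_mono_on (by positivity : (0:ℝ) ≤ 2*π) hInt
      (intervalIntegrable_const : IntervalIntegrable (fun _ : ℝ => (K*S)^p) volume 0 (2*π))
      (fun x _ => Real.rpow_le_rpow (norm_nonneg _) (hFb x) hp.le)
  rw [intervalIntegral.integral_const, smul_eq_mul, sub_zero] at hmono
  have hcos : 0 < Real.cos (π*p/2) := Real.cos_pos_of_mem_Ioo
    ⟨by nlinarith [Real.pi_pos], by nlinarith [Real.pi_pos]⟩
  have hkey : K ^ p * Real.cos (π*p/2) ≤ 4 := by
    rw [hKdef]; exact key_ineq p hp hp1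
  have hfinal : (∫ φ in (0:ℝ)..(2*π), ‖∑' n, f n φ‖ ^ p)
      ≤ (8 * π / Real.cos (π * p / 2)) * S ^ p := by
    calc (∫ φ in (0:ℝ)..(2*π), ‖∑' n, f n φ‖ ^ p) ≤ 2*π * (K*S)^p := hmono
      _ = 2*π*(K^p * S^p) := by rw [Real.mul_rpow hK0 hS0]
      _ ≤ (8 * π / Real.cos (π * p / 2)) * S^p := by
          rw [div_mul_eq_mul_div, le_div_iff₀ hcos]
          nlinarith [mul_le_mul_of_nonneg_right hkey (Real.rpow_nonneg hS0 p),
            Real.pi_pos, Real.rpow_nonneg hS0 p]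
  exact hfinal
end

section
/- For any t ∈ ℂ, r > 0, and 0 < p < 1/2: ∫₀^{2π} dφ / |re^{iφ} − t|^{2p} ≤ (2π / (1 − 2p)) · (1 / r^{2p}). -/
open Complex MeasureTheory Real

lemma key_lb (x : ℝ) (r : ℝ) (t : ℂ) (hr : 0 < r) :
    r * |Real.sin x| ≤ ‖(r : ℂ) * Complex.exp (((x + t.arg : ℝ) : ℂ) * Complex.I) - t‖ := by
  set θ := t.arg
  have ht : (‖t‖ : ℂ) * Complex.exp ((θ:ℂ) * Complex.I) = t :=
    Complex.norm_mul_exp_arg_mul_I t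
  have e1 : Complex.exp (-(θ:ℂ) * Complex.I) * Complex.exp ((θ:ℂ) * Complex.I) = 1 := by
    rw [← Complex.exp_add]; ring_nf; exact Complex.exp_zero
  have e2 : Complex.exp (-(θ:ℂ) * Complex.I) * Complex.exp (((x + θ : ℝ) : ℂ) * Complex.I)
      = Complex.exp ((x:ℂ) * Complex.I) := by
    rw [← Complex.exp_add]; congr 1; push_cast; ring
  have h2 : Complex.exp (-(θ:ℂ) * Complex.I) *
        ((r : ℂ) * Complex.exp (((x + θ : ℝ) : ℂ) * Complex.I) - t)
      = (r : ℂ) * Complex.exp ((x:ℂ) * Complex.I) - (‖t‖ : ℂ) := by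
    have ht' : Complex.exp (-(θ:ℂ) * Complex.I) * t = (‖t‖ : ℂ) := by
      conv_lhs => rw [← ht]
      rw [mul_comm ((‖t‖ : ℂ)) _, ← mul_assoc, e1, one_mul]
    rw [mul_sub, ht', mul_comm (Complex.exp (-(θ:ℂ) * Complex.I)), mul_assoc, mul_comm _ (Complex.exp (-(θ:ℂ) * Complex.I)), e2]
  have h1 : ‖(r : ℂ) * Complex.exp (((x + θ : ℝ) : ℂ) * Complex.I) - t‖
      = ‖(r : ℂ) * Complex.exp ((x:ℂ) * Complex.I) - (‖t‖ : ℂ)‖ := by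
    rw [← h2, norm_mul, Complex.norm_exp]
    simp
  rw [h1]
  have him : ((r : ℂ) * Complex.exp ((x:ℂ) * Complex.I) - (‖t‖ : ℂ)).im
      = r * Real.sin x := by
    simp [Complex.exp_mul_I, Complex.sin_ofReal_re]
  calc r * |Real.sin x| = |r * Real.sin x| := by
        rw [abs_mul, abs_of_pos hr]
    _ = |((r : ℂ) * Complex.exp ((x:ℂ) * Complex.I) - (‖t‖ : ℂ)).im| := by rw [him]
    _ ≤ _ := Complex.abs_im_le_norm _

lemma sin_rpow_int (c : ℝ) (hc1 : -1 < c) (hc0 : c < 0) :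
    IntervalIntegrable (fun x => |Real.sin x| ^ c) volume 0 (π/2) := by
  have hπ := Real.pi_pos
  have hG : IntervalIntegrable (fun x : ℝ => (2/π) ^ c * x ^ c) volume 0 (π/2) :=
    (intervalIntegral.intervalIntegrable_rpow' hc1).const_mul _
  refine hG.mono_fun' ?_ ?_
  · exact (by fun_prop : Measurable fun x : ℝ => |Real.sin x| ^ c).aestronglyMeasurable
  · rw [Set.uIoc_of_le (by positivity : (0:ℝ) ≤ π/2)]
    filter_upwards [ae_restrict_mem measurableSet_Ioc] with x hx
    have hx0 : 0 < x := hx.1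
    have hs : 2/π * x ≤ Real.sin x := Real.mul_le_sin hx0.le hx.2
    have hsp : 0 < 2/π * x := by positivity
    have habs : |Real.sin x| = Real.sin x := _root_.abs_of_pos (lt_of_lt_of_le hsp hs)
    rw [Real.norm_eq_abs, _root_.abs_of_nonneg (Real.rpow_nonneg (abs_nonneg _) _), habs,
      ← Real.mul_rpow (by positivity) hx0.le]
    exact Real.rpow_le_rpow_of_nonpos hsp hs hc0.le

lemma sin_rpow_bound (c : ℝ) (hc1 : -1 < c) (hc0 : c < 0) :
    ∫ x in (0:ℝ)..(π/2), |Real.sin x| ^ c ≤ (π/2) / (c + 1) := by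
  have hπ := Real.pi_pos
  have hG : IntervalIntegrable (fun x : ℝ => (2/π) ^ c * x ^ c) volume 0 (π/2) :=
    (intervalIntegral.intervalIntegrable_rpow' hc1).const_mul _
  have hmono : ∫ x in (0:ℝ)..(π/2), |Real.sin x| ^ c
      ≤ ∫ x in (0:ℝ)..(π/2), (2/π) ^ c * x ^ c := by
    refine intervalIntegral.integral_mono_on (by positivity) (sin_rpow_int c hc1 hc0) hG ?_
    intro x hx
    rcases eq_or_lt_of_le hx.1 with h0 | hx0
    · rw [← h0]
      simp [Real.zero_rpow hc0.ne]
    · have hs : 2/π * x ≤ Real.sin x := Real.mul_le_sin hx0.le hx.2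
      have hsp : 0 < 2/π * x := by positivity
      have habs : |Real.sin x| = Real.sin x := _root_.abs_of_pos (lt_of_lt_of_le hsp hs)
      rw [habs, ← Real.mul_rpow (by positivity) hx0.le]
      exact Real.rpow_le_rpow_of_nonpos hsp hs hc0.le
  refine hmono.trans ?_
  rw [intervalIntegral.integral_const_mul, integral_rpow (Or.inl hc1)]
  rw [Real.zero_rpow (by linarith : c + 1 ≠ 0), sub_zero]
  have h1 : (π/2) ^ (c+1) = (π/2) ^ c * (π/2) := by
    rw [Real.rpow_add (by positivity), Real.rpow_one]
  have h2 : (2/π) ^ c = ((π/2) ^ c)⁻¹ := by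
    rw [← Real.inv_rpow (by positivity : (0:ℝ) ≤ π/2), inv_div]
  rw [h1, h2, ← mul_div_assoc, ← mul_assoc, inv_mul_cancel₀ (by positivity : (π/2:ℝ) ^ c ≠ 0), one_mul]
lemma sin_rpow_two_pi (c : ℝ) (hc1 : -1 < c) (hc0 : c < 0) :
    IntervalIntegrable (fun x => |Real.sin x| ^ c) volume 0 (2*π) ∧
    ∫ x in (0:ℝ)..(2*π), |Real.sin x| ^ c ≤ 2*π / (c + 1) := by
  have hπ := Real.pi_pos
  set h : ℝ → ℝ := fun x => |Real.sin x| ^ c with hh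
  have hsymm : ∀ x, h (π - x) = h x := fun x => by simp [hh, Real.sin_pi_sub]
  have hshift : ∀ x, h (x + π) = h x := fun x => by simp [hh, Real.sin_add_pi]
  have hshift' : ∀ x, h (x - π) = h x := fun x => by
    simpa using (hshift (x - π)).symm
  have hI0 : IntervalIntegrable h volume 0 (π/2) := sin_rpow_int c hc1 hc0
  have hI1 : IntervalIntegrable h volume (π/2) π := by
    have := (hI0.comp_sub_left π).symm
    simp only [hsymm] at this
    rw [sub_zero, (by ring : π - π/2 = π/2)] at this
    exact this
  have hIπ : IntervalIntegrable h volume 0 π := hI0.trans hI1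
  have hI2 : IntervalIntegrable h volume π (2*π) := by
    have := hIπ.comp_sub_right π
    simp only [hshift'] at this
    rw [zero_add, (by ring : π + π = 2*π)] at this
    exact this
  have hI : IntervalIntegrable h volume 0 (2*π) := hIπ.trans hI2
  refine ⟨hI, ?_⟩
  have eq1 : ∫ x in π..(2*π), h x = ∫ x in (0:ℝ)..π, h x := by
    have := intervalIntegral.integral_comp_add_right (a := (0:ℝ)) (b := π) h π
    simp only [hshift] at this
    rw [zero_add, (by ring : π + π = 2*π)] at this
    rw [← this]
  have eq2 : ∫ x in (π/2)..π, h x = ∫ x in (0:ℝ)..(π/2), h x := by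
    have := intervalIntegral.integral_comp_sub_left (a := (0:ℝ)) (b := π/2) h π
    simp only [hsymm] at this
    rw [sub_zero, (by ring : π - π/2 = π/2)] at this
    rw [← this]
  have split1 : ∫ x in (0:ℝ)..(2*π), h x = (∫ x in (0:ℝ)..π, h x) + ∫ x in π..(2*π), h x :=
    (intervalIntegral.integral_add_adjacent_intervals hIπ hI2).symm
  have split2 : ∫ x in (0:ℝ)..π, h x = (∫ x in (0:ℝ)..(π/2), h x) + ∫ x in (π/2)..π, h x :=
    (intervalIntegral.integral_add_adjacent_intervals hI0 hI1).symm
  have hB := sin_rpow_bound c hc1 hc0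
  have hc1' : 0 < c + 1 := by linarith
  have : 2*π / (c+1) = 4 * ((π/2) / (c+1)) := by field_simp; ring
  rw [split1, eq1, split2, eq2, this]
  have hB' : ∫ x in (0:ℝ)..(π/2), h x ≤ π/2 / (c+1) := hB
  linarith
theorem kernel_integral_estimate (t : ℂ) (r p : ℝ) (hr : 0 < r)
    (hp : 0 < p) (hp2 : p < 1 / 2) :
    ∫ φ in (0:ℝ)..(2 * π),
        1 / ‖(r : ℂ) * Complex.exp ((φ : ℂ) * Complex.I) - t‖ ^ (2 * p)
      ≤ (2 * π / (1 - 2 * p)) * (1 / r ^ (2 * p)) := by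
  have hπ := Real.pi_pos
  set c : ℝ := -(2 * p) with hc
  have hc0 : c < 0 := by rw [hc]; linarith
  have hc1 : -1 < c := by rw [hc]; linarith
  obtain ⟨hI, hJ⟩ := sin_rpow_two_pi c hc1 hc0
  set θ := t.arg with hθ
  set f : ℝ → ℝ :=
    fun φ => 1 / ‖(r : ℂ) * Complex.exp ((φ : ℂ) * Complex.I) - t‖ ^ (2 * p) with hf
  have hfper : Function.Periodic f (2*π) := by
    intro φ
    simp only [hf]
    have : ((φ + 2*π : ℝ) : ℂ) * Complex.I = (φ:ℂ) * Complex.I + 2*π*Complex.I := by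
      push_cast; ring
    rw [this, Complex.exp_add, Complex.exp_two_pi_mul_I, mul_one]
  have step1 : ∫ φ in (0:ℝ)..(2*π), f φ = ∫ x in (0:ℝ)..(2*π), f (x + θ) := by
    have h1 := hfper.intervalIntegral_add_eq 0 θ
    have h2 := intervalIntegral.integral_comp_add_right (a := (0:ℝ)) (b := 2*π) f θ
    rw [zero_add, add_comm θ (2*π)] at h1
    rw [zero_add] at h2
    rw [h1, ← h2]
  have hle : (0:ℝ) ≤ 2*π := by positivity
  have step2 : ∫ x in (0:ℝ)..(2*π), f (x + θ)
      ≤ ∫ x in (0:ℝ)..(2*π), r ^ c * |Real.sin x| ^ c := by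
    rw [intervalIntegral.integral_of_le hle, intervalIntegral.integral_of_le hle]
    refine integral_mono_of_nonneg ?_ ?_ ?_
    · refine Filter.Eventually.of_forall fun x => ?_
      simp only [hf]
      positivity
    · exact (intervalIntegrable_iff_integrableOn_Ioc_of_le hle).1 (hI.const_mul _)
    · have hN : volume {x : ℝ | Real.sin x = 0} = 0 := by
        refine measure_mono_null ?_ ((Set.countable_range fun n : ℤ => (n:ℝ)*π).measure_zero _)
        intro x hx
        obtain ⟨n, hn⟩ := Real.sin_eq_zero_iff.1 hx
        exact ⟨n, hn⟩
      have hae : ∀ᵐ x ∂(volume.restrict (Set.Ioc (0:ℝ) (2*π))), Real.sin x ≠ 0 := by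
        refine ae_restrict_of_ae ?_
        rw [ae_iff]
        simpa using hN
      filter_upwards [hae] with x hx
      have hlb := key_lb x r t hr
      have hpos : 0 < r * |Real.sin x| := mul_pos hr (abs_pos.2 hx)
      have hA : 0 < ‖(r : ℂ) * Complex.exp (((x + θ : ℝ) : ℂ) * Complex.I) - t‖ :=
        lt_of_lt_of_le hpos hlb
      simp only [hf]
      calc 1 / ‖(r : ℂ) * Complex.exp (((x + θ : ℝ) : ℂ) * Complex.I) - t‖ ^ (2*p)
          = ‖(r : ℂ) * Complex.exp (((x + θ : ℝ) : ℂ) * Complex.I) - t‖ ^ c := by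
            rw [hc, Real.rpow_neg (norm_nonneg _), one_div]
        _ ≤ (r * |Real.sin x|) ^ c := Real.rpow_le_rpow_of_nonpos hpos hlb hc0.le
        _ = r ^ c * |Real.sin x| ^ c := Real.mul_rpow hr.le (abs_nonneg _)
  have hc1' : c + 1 = 1 - 2*p := by rw [hc]; ring
  calc ∫ φ in (0:ℝ)..(2*π), f φ
      = ∫ x in (0:ℝ)..(2*π), f (x + θ) := step1
    _ ≤ ∫ x in (0:ℝ)..(2*π), r ^ c * |Real.sin x| ^ c := step2
    _ = r ^ c * ∫ x in (0:ℝ)..(2*π), |Real.sin x| ^ c := intervalIntegral.integral_const_mul _ _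
    _ ≤ r ^ c * (2 * π / (c + 1)) :=
        mul_le_mul_of_nonneg_left hJ (Real.rpow_nonneg hr.le c)
    _ = (2 * π / (1 - 2 * p)) * (1 / r ^ (2 * p)) := by
        rw [hc1', hc, Real.rpow_neg hr.le, one_div, mul_comm]
end

section
/- Let (c_n), (t_n) be complex sequences with |t_n| → ∞, no finite limit points, (t_n) of finite exponent of convergence ρ, and sup_n |c_n|/|t_n| < ∞. Then for 0 < p < 1/2, the quantity X(r) = ∫₀^{2π} | ∑_{r/√2 ≤ |t_n| ≤ r√2} c_n/(re^{iφ} − t_n)² |^p dφ satisfies X(r) = o(r^{ρ+1−p}) as r → ∞. -/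
open Complex MeasureTheory Real Filter
open scoped Classical
open scoped Topology

private lemma mte_rpow_add_le {p : ℝ} (hp0 : 0 ≤ p) (hp1 : p ≤ 1) {a b : ℝ}
    (ha : 0 ≤ a) (hb : 0 ≤ b) : (a + b) ^ p ≤ a ^ p + b ^ p := by
  lift a to NNReal using ha
  lift b to NNReal using hb
  have h := NNReal.rpow_add_le_add_rpow a b hp0 hp1
  exact_mod_cast h

private lemma mte_rpow_sum_le {p : ℝ} (hp0 : 0 < p) (hp1 : p ≤ 1) (s : Finset ℕ) (f : ℕ → ℝ)
    (hf : ∀ n, 0 ≤ f n) : (∑ n ∈ s, f n) ^ p ≤ ∑ n ∈ s, f n ^ p := by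
  classical
  induction s using Finset.cons_induction with
  | empty => simp [Real.zero_rpow hp0.ne']
  | cons a s ha ih =>
      rw [Finset.sum_cons, Finset.sum_cons]
      calc (f a + ∑ n ∈ s, f n) ^ p ≤ f a ^ p + (∑ n ∈ s, f n) ^ p :=
            mte_rpow_add_le hp0.le hp1 (hf a) (Finset.sum_nonneg fun i _ => hf i)
        _ ≤ f a ^ p + ∑ n ∈ s, f n ^ p := add_le_add_right ih _

private lemma mte_term_eq (c w : ℂ) {p : ℝ} (hp : 0 < p) :
    ‖c / w ^ 2‖ ^ p
      = ‖c‖ ^ p * ‖w‖ ^ (-(2 * p)) := by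
  have hw : (0:ℝ) ≤ ‖w‖ := norm_nonneg w
  rw [norm_div, norm_pow, Real.div_rpow (norm_nonneg c) (pow_nonneg hw 2),
    div_eq_mul_inv, ← Real.rpow_neg (pow_nonneg hw 2)]
  congr 1
  rw [← Real.rpow_natCast (‖w‖) 2, ← Real.rpow_mul hw]
  norm_num

private lemma mte_abs_sq (r s φ : ℝ) :
    ‖(r:ℂ) * Complex.exp ((φ:ℂ) * Complex.I) - (s:ℂ)‖ ^ 2
      = r ^ 2 + s ^ 2 - 2 * r * s * Real.cos φ := by
  rw [Complex.sq_norm, Complex.normSq_apply]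
  simp only [Complex.sub_re, Complex.sub_im, Complex.mul_re, Complex.mul_im,
    Complex.ofReal_re, Complex.ofReal_im, Complex.exp_ofReal_mul_I_re,
    Complex.exp_ofReal_mul_I_im]
  have h := Real.sin_sq_add_cos_sq φ
  ring_nf
  nlinarith [h]

private lemma mte_lower_bound {r s φ d : ℝ} (hr : 0 < r) (hs : r / Real.sqrt 2 ≤ s)
    (hcos : 2 / π ^ 2 * d ^ 2 ≤ 1 - Real.cos φ) :
    2 * Real.sqrt 2 / π ^ 2 * (r * d) ^ 2
      ≤ ‖(r:ℂ) * Complex.exp ((φ:ℂ) * Complex.I) - (s:ℂ)‖ ^ 2 := by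
  rw [mte_abs_sq]
  have h2 : Real.sqrt 2 ^ 2 = 2 := Real.sq_sqrt (by norm_num)
  have hsq2 : (0:ℝ) < Real.sqrt 2 := Real.sqrt_pos.2 (by norm_num)
  have hrs : r ≤ Real.sqrt 2 * s := by
    rw [div_le_iff₀ hsq2] at hs; linarith [hs]
  have hs0 : 0 < s := lt_of_lt_of_le (by positivity) hs
  have hcos1 : Real.cos φ ≤ 1 := Real.cos_le_one φ
  have hπ : 0 < π := Real.pi_pos
  have h1 : 2 * r * s * (1 - Real.cos φ) ≤ r ^ 2 + s ^ 2 - 2 * r * s * Real.cos φ := by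
    nlinarith [sq_nonneg (r - s)]
  have h2' : Real.sqrt 2 * r ^ 2 * (1 - Real.cos φ) ≤ 2 * r * s * (1 - Real.cos φ) := by
    have hb : Real.sqrt 2 * r ≤ 2 * s := by nlinarith
    nlinarith [mul_nonneg hr.le (sub_nonneg.2 hcos1)]
  have h3 : Real.sqrt 2 * r ^ 2 * (2 / π ^ 2 * d ^ 2) ≤ Real.sqrt 2 * r ^ 2 * (1 - Real.cos φ) := by
    have hA : (0:ℝ) ≤ Real.sqrt 2 * r ^ 2 := by positivity
    exact mul_le_mul_of_nonneg_left hcos hA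
  have heq : 2 * Real.sqrt 2 / π ^ 2 * (r * d) ^ 2
      = Real.sqrt 2 * r ^ 2 * (2 / π ^ 2 * d ^ 2) := by
    field_simp
  linarith [heq.le, heq.ge]

private lemma mte_rpow_sq (x : ℝ) (hx : 0 ≤ x) (p : ℝ) :
    x ^ (-(2 * p)) = (x ^ 2) ^ (-p) := by
  rw [← Real.rpow_natCast x 2, ← Real.rpow_mul hx]
  norm_num

private noncomputable def mteA (p : ℝ) : ℝ := (2 * Real.sqrt 2 / π ^ 2) ^ (-p)

private noncomputable def mteC (p : ℝ) : ℝ := 2 * mteA p * (π ^ (1 - 2 * p) / (1 - 2 * p))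

private lemma mteA_nonneg (p : ℝ) : 0 ≤ mteA p := Real.rpow_nonneg (by positivity) _

private lemma mteC_nonneg {p : ℝ} (hp2 : p < 1 / 2) : 0 ≤ mteC p := by
  have h : (0:ℝ) < 1 - 2 * p := by linarith
  have h1 := mteA_nonneg p
  have hπ : (0:ℝ) < π := Real.pi_pos
  have h2 : (0:ℝ) ≤ π ^ (1 - 2 * p) := Real.rpow_nonneg hπ.le _
  unfold mteC
  positivity

private lemma mte_key_real {p : ℝ} (hp : 0 < p) (hp2 : p < 1 / 2) {r : ℝ} (hr : 0 < r)
    {s : ℝ} (hs : r / Real.sqrt 2 ≤ s) :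
    IntegrableOn
      (fun φ : ℝ => ‖(r:ℂ) * Complex.exp ((φ:ℂ) * Complex.I) - (s:ℂ)‖ ^ (-(2 * p)))
      (Set.Ioc 0 (2 * π)) volume ∧
    (∫ φ in Set.Ioc 0 (2 * π),
        ‖(r:ℂ) * Complex.exp ((φ:ℂ) * Complex.I) - (s:ℂ)‖ ^ (-(2 * p)))
      ≤ mteC p * r ^ (-(2 * p)) := by
  have hπ : (0:ℝ) < π := Real.pi_pos
  set u : ℝ → ℝ := fun φ => ‖(r:ℂ) * Complex.exp ((φ:ℂ) * Complex.I) - (s:ℂ)‖ with hu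
  have hu0 : ∀ φ, 0 ≤ u φ := fun φ => norm_nonneg _
  set h : ℝ → ℝ := fun φ => u φ ^ (-(2 * p)) with hh
  have hh0 : ∀ φ, 0 ≤ h φ := fun φ => Real.rpow_nonneg (hu0 φ) _
  have hmeas : Measurable h := by
    have hc : Continuous fun φ : ℝ => u φ ^ (2 * p) := by
      apply Continuous.rpow_const
      · exact continuous_norm.comp (by continuity)
      · exact fun x => Or.inr (by positivity)
    have heq : h = fun φ => (u φ ^ (2 * p))⁻¹ := by
      funext φ; exact Real.rpow_neg (hu0 φ) _
    rw [heq]; exact hc.measurable.inv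
  have key : ∀ φ d : ℝ, 0 < d → 2 / π ^ 2 * d ^ 2 ≤ 1 - Real.cos φ →
      h φ ≤ mteA p * r ^ (-(2 * p)) * d ^ (-(2 * p)) := by
    intro φ d hd hcos
    have hQ : (0:ℝ) < 2 * Real.sqrt 2 / π ^ 2 * (r * d) ^ 2 := by positivity
    have hle := mte_lower_bound hr hs hcos
    have h1 : h φ ≤ (2 * Real.sqrt 2 / π ^ 2 * (r * d) ^ 2) ^ (-p) := by
      rw [hh]
      simp only []
      rw [mte_rpow_sq _ (hu0 φ)]
      exact Real.rpow_le_rpow_of_nonpos hQ hle (by linarith)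
    refine h1.trans_eq ?_
    rw [Real.mul_rpow (by positivity) (by positivity), ← mte_rpow_sq (r * d) (by positivity),
      Real.mul_rpow hr.le hd.le, mteA]
    ring
  set m1 : ℝ → ℝ := fun φ => mteA p * r ^ (-(2 * p)) * φ ^ (-(2 * p)) with hm1
  set m2 : ℝ → ℝ := fun φ => mteA p * r ^ (-(2 * p)) * (2 * π - φ) ^ (-(2 * p)) with hm2
  have hmaj1 : IntegrableOn m1 (Set.Ioc 0 π) volume := by
    have h0 : IntervalIntegrable (fun x : ℝ => x ^ (-(2 * p))) volume 0 π :=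
      intervalIntegral.intervalIntegrable_rpow' (by linarith)
    exact ((intervalIntegrable_iff_integrableOn_Ioc_of_le hπ.le).1 h0).const_mul _
  have hmaj2 : IntegrableOn m2 (Set.Ioc π (2 * π)) volume := by
    have h0 : IntervalIntegrable (fun x : ℝ => x ^ (-(2 * p))) volume 0 π :=
      intervalIntegral.intervalIntegrable_rpow' (by linarith)
    have h1 : IntervalIntegrable (fun x : ℝ => (2 * π - x) ^ (-(2 * p))) volume
        (2 * π - 0) (2 * π - π) := h0.comp_sub_left (2 * π) enorm_ne_top
    have h2 : IntervalIntegrable (fun x : ℝ => (2 * π - x) ^ (-(2 * p))) volume π (2 * π) := by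
      have h2' := h1.symm
      rw [show 2 * π - π = π by ring, show 2 * π - 0 = 2 * π by ring] at h2'
      exact h2'
    exact ((intervalIntegrable_iff_integrableOn_Ioc_of_le (by linarith)).1 h2).const_mul _
  have hb1 : ∀ᵐ φ ∂(volume.restrict (Set.Ioc (0:ℝ) π)), h φ ≤ m1 φ := by
    rw [ae_restrict_iff' measurableSet_Ioc]
    refine ae_of_all _ fun φ hφ => ?_
    have habs : |φ| ≤ π := abs_le.2 ⟨by linarith [hφ.1], hφ.2⟩
    have hcb := Real.cos_le_one_sub_mul_cos_sq habs
    exact key φ φ hφ.1 (by linarith)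
  have hb2 : ∀ᵐ φ ∂(volume.restrict (Set.Ioc π (2 * π))), h φ ≤ m2 φ := by
    have hne : ∀ᵐ φ : ℝ ∂volume, φ ≠ 2 * π := by
      rw [MeasureTheory.ae_iff]
      have hset : {a : ℝ | ¬a ≠ 2 * π} = {2 * π} := by ext a; simp
      rw [hset]
      exact measure_singleton _
    rw [ae_restrict_iff' measurableSet_Ioc]
    filter_upwards [hne] with φ hφne hφ
    obtain ⟨hφ1, hφ2⟩ := hφ
    have hlt : φ < 2 * π := lt_of_le_of_ne hφ2 hφne
    have habs : |φ - 2 * π| ≤ π := abs_le.2 ⟨by linarith, by linarith⟩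
    have hcb := Real.cos_le_one_sub_mul_cos_sq habs
    rw [Real.cos_sub_two_pi] at hcb
    have heq2 : (φ - 2 * π) ^ 2 = (2 * π - φ) ^ 2 := by ring
    rw [heq2] at hcb
    exact key φ (2 * π - φ) (by linarith) (by linarith)
  have hint1 : IntegrableOn h (Set.Ioc 0 π) volume := by
    refine hmaj1.mono' hmeas.aestronglyMeasurable.restrict ?_
    filter_upwards [hb1] with φ hφ
    rwa [Real.norm_of_nonneg (hh0 φ)]
  have hint2 : IntegrableOn h (Set.Ioc π (2 * π)) volume := by
    refine hmaj2.mono' hmeas.aestronglyMeasurable.restrict ?_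
    filter_upwards [hb2] with φ hφ
    rwa [Real.norm_of_nonneg (hh0 φ)]
  have hsplit : Set.Ioc (0:ℝ) (2 * π) = Set.Ioc 0 π ∪ Set.Ioc π (2 * π) :=
    (Set.Ioc_union_Ioc_eq_Ioc hπ.le (by linarith)).symm
  have hint : IntegrableOn h (Set.Ioc 0 (2 * π)) volume := by
    rw [hsplit]; exact hint1.union hint2
  refine ⟨hint, ?_⟩
  have hJ : ∫ x in (0:ℝ)..π, x ^ (-(2 * p)) = π ^ (1 - 2 * p) / (1 - 2 * p) := by
    rw [integral_rpow (Or.inl (by linarith))]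
    rw [Real.zero_rpow (by linarith : -(2 * p) + 1 ≠ 0)]
    norm_num
    ring_nf
  have hI1 : ∫ φ in Set.Ioc (0:ℝ) π, m1 φ
      = mteA p * r ^ (-(2 * p)) * (π ^ (1 - 2 * p) / (1 - 2 * p)) := by
    rw [MeasureTheory.integral_const_mul]
    rw [← intervalIntegral.integral_of_le hπ.le, hJ]
  have hI2 : ∫ φ in Set.Ioc π (2 * π), m2 φ
      = mteA p * r ^ (-(2 * p)) * (π ^ (1 - 2 * p) / (1 - 2 * p)) := by
    rw [MeasureTheory.integral_const_mul]
    rw [← intervalIntegral.integral_of_le (by linarith : π ≤ 2 * π)]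
    rw [intervalIntegral.integral_comp_sub_left (fun x : ℝ => x ^ (-(2 * p))) (2 * π)]
    rw [show 2 * π - 2 * π = (0:ℝ) by ring, show 2 * π - π = π by ring, hJ]
  have hle1 : ∫ φ in Set.Ioc (0:ℝ) π, h φ ≤ ∫ φ in Set.Ioc (0:ℝ) π, m1 φ :=
    integral_mono_of_nonneg (ae_of_all _ hh0) hmaj1 hb1
  have hle2 : ∫ φ in Set.Ioc π (2 * π), h φ ≤ ∫ φ in Set.Ioc π (2 * π), m2 φ :=
    integral_mono_of_nonneg (ae_of_all _ hh0) hmaj2 hb2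
  have hunion : ∫ φ in Set.Ioc (0:ℝ) (2 * π), h φ
      = (∫ φ in Set.Ioc (0:ℝ) π, h φ) + ∫ φ in Set.Ioc π (2 * π), h φ := by
    rw [hsplit]
    exact MeasureTheory.setIntegral_union (Set.Ioc_disjoint_Ioc_of_le le_rfl)
      measurableSet_Ioc hint1 hint2
  rw [hunion]
  have hCeq : mteC p * r ^ (-(2 * p))
      = mteA p * r ^ (-(2 * p)) * (π ^ (1 - 2 * p) / (1 - 2 * p))
        + mteA p * r ^ (-(2 * p)) * (π ^ (1 - 2 * p) / (1 - 2 * p)) := by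
    rw [mteC]; ring
  rw [hCeq]
  exact add_le_add (hle1.trans hI1.le) (hle2.trans hI2.le)

private lemma mte_key {p : ℝ} (hp : 0 < p) (hp2 : p < 1 / 2) {r : ℝ} (hr : 0 < r)
    {t : ℂ} (ht : r / Real.sqrt 2 ≤ ‖t‖) :
    IntegrableOn
      (fun φ : ℝ => ‖(r:ℂ) * Complex.exp ((φ:ℂ) * Complex.I) - t‖ ^ (-(2 * p)))
      (Set.Ioc 0 (2 * π)) volume ∧
    (∫ φ in Set.Ioc 0 (2 * π),
        ‖(r:ℂ) * Complex.exp ((φ:ℂ) * Complex.I) - t‖ ^ (-(2 * p)))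
      ≤ mteC p * r ^ (-(2 * p)) := by
  have hπ : (0:ℝ) < π := Real.pi_pos
  obtain ⟨hint_s, hbound_s⟩ := mte_key_real hp hp2 hr (s := ‖t‖) ht
  set θ := t.arg with hθ
  set H : ℝ → ℝ :=
    fun φ => ‖(r:ℂ) * Complex.exp ((φ:ℂ) * Complex.I) - t‖ ^ (-(2 * p)) with hH
  have habs : ((‖t‖ : ℝ):ℂ) * Complex.exp ((θ:ℂ) * Complex.I) = t :=
    Complex.norm_mul_exp_arg_mul_I t
  have hshift : ∀ φ : ℝ, H (φ + θ)
      = ‖(r:ℂ) * Complex.exp ((φ:ℂ) * Complex.I)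
          - ((‖t‖ : ℝ):ℂ)‖ ^ (-(2 * p)) := by
    intro φ
    have h1 : (r:ℂ) * Complex.exp ((((φ + θ : ℝ)):ℂ) * Complex.I) - t
        = Complex.exp ((θ:ℂ) * Complex.I)
          * ((r:ℂ) * Complex.exp ((φ:ℂ) * Complex.I) - ((‖t‖ : ℝ):ℂ)) := by
      rw [mul_sub]
      rw [show Complex.exp ((θ:ℂ) * Complex.I) * ((‖t‖ : ℝ):ℂ) = t by
        rw [mul_comm]; exact habs]
      rw [show (((φ + θ : ℝ)):ℂ) * Complex.I = (φ:ℂ) * Complex.I + (θ:ℂ) * Complex.I by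
        push_cast; ring]
      rw [Complex.exp_add]
      ring
    show ‖(r:ℂ) * Complex.exp ((((φ + θ : ℝ)):ℂ) * Complex.I) - t‖ ^ (-(2 * p)) = _
    rw [h1, norm_mul, Complex.norm_exp_ofReal_mul_I, one_mul]
  have hper : Function.Periodic H (2 * π) := by
    intro x
    show ‖(r:ℂ) * Complex.exp ((((x + 2 * π : ℝ)):ℂ) * Complex.I) - t‖ ^ (-(2 * p)) = _
    rw [show (((x + 2 * π : ℝ)):ℂ) * Complex.I
        = (x:ℂ) * Complex.I + 2 * (π:ℂ) * Complex.I by push_cast; ring,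
      Complex.exp_add, Complex.exp_two_pi_mul_I, mul_one]
  have hshift_fun : (fun φ : ℝ => H (φ + θ))
      = fun φ : ℝ => ‖(r:ℂ) * Complex.exp ((φ:ℂ) * Complex.I)
          - ((‖t‖ : ℝ):ℂ)‖ ^ (-(2 * p)) := funext hshift
  have hint_h : IntervalIntegrable (fun φ : ℝ => H (φ + θ)) volume 0 (2 * π) := by
    rw [intervalIntegrable_iff_integrableOn_Ioc_of_le (by linarith)]
    rw [hshift_fun]
    exact hint_s
  have hH1 : IntervalIntegrable H volume θ (2 * π + θ) := by
    have h2 := hint_h.comp_add_right (-θ) enorm_ne_top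
    rw [show (0:ℝ) - -θ = θ by ring, show 2 * π - -θ = 2 * π + θ by ring] at h2
    have heq : (fun x : ℝ => H (x + -θ + θ)) = H := by funext x; congr 1; ring
    rwa [heq] at h2
  have hH2 : IntervalIntegrable H volume (θ - 2 * π) θ := by
    have h2 := hH1.comp_add_right (2 * π) enorm_ne_top
    rw [show 2 * π + θ - 2 * π = θ by ring] at h2
    have heq : (fun x : ℝ => H (x + 2 * π)) = H := funext fun x => hper x
    rwa [heq] at h2
  have hH3 : IntervalIntegrable H volume (2 * π + θ) (4 * π + θ) := by
    have h2 := hH1.comp_add_right (-(2 * π)) enorm_ne_top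
    rw [show θ - -(2 * π) = 2 * π + θ by ring, show 2 * π + θ - -(2 * π) = 4 * π + θ by ring] at h2
    have heq : (fun x : ℝ => H (x + -(2 * π))) = H := by
      funext x
      have h3 := hper (x - 2 * π)
      rw [sub_add_cancel] at h3
      rw [show x + -(2 * π) = x - 2 * π by ring, h3]
    rwa [heq] at h2
  have hHfull : IntervalIntegrable H volume (θ - 2 * π) (4 * π + θ) := (hH2.trans hH1).trans hH3
  have hθlo : -π < θ := Complex.neg_pi_lt_arg t
  have hθhi : θ ≤ π := Complex.arg_le_pi t
  have hH02 : IntervalIntegrable H volume 0 (2 * π) := by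
    apply hHfull.mono_set
    rw [Set.uIcc_of_le (by linarith : (0:ℝ) ≤ 2 * π),
      Set.uIcc_of_le (by linarith : θ - 2 * π ≤ 4 * π + θ)]
    exact Set.Icc_subset_Icc (by linarith) (by linarith)
  have hval : ∫ φ in (0:ℝ)..(2 * π), H φ
      = ∫ φ in Set.Ioc 0 (2 * π),
          ‖(r:ℂ) * Complex.exp ((φ:ℂ) * Complex.I)
            - ((‖t‖ : ℝ):ℂ)‖ ^ (-(2 * p)) := by
    have e1 : ∫ φ in (0:ℝ)..(2 * π), H φ = ∫ φ in θ..(θ + 2 * π), H φ := by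
      have := hper.intervalIntegral_add_eq 0 θ
      rwa [zero_add] at this
    have e2 : ∫ φ in (0:ℝ)..(2 * π), H (φ + θ) = ∫ φ in θ..(2 * π + θ), H φ := by
      have h3 := intervalIntegral.integral_comp_add_right (a := 0) (b := 2 * π) H θ
      rwa [zero_add] at h3
    rw [e1, show θ + 2 * π = 2 * π + θ by ring, ← e2]
    rw [hshift_fun]
    exact intervalIntegral.integral_of_le (by linarith)
  constructor
  · exact (intervalIntegrable_iff_integrableOn_Ioc_of_le (by linarith)).1 hH02
  · rw [← intervalIntegral.integral_of_le (by linarith : (0:ℝ) ≤ 2 * π), hval]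
    exact hbound_s

theorem middle_trivial_estimate (c t : ℕ → ℂ) (ρ : ℝ)
    (hlim : Tendsto (fun n => ‖t n‖) atTop atTop)
    (hcl : ∀ z : ℂ, ¬ MapClusterPt z atTop t)
    (hρ : Summable (fun n => 1 / ‖t n‖ ^ (ρ + 1)))
    (hsup : BddAbove (Set.range fun n => ‖c n‖ / ‖t n‖))
    (p : ℝ) (hp : 0 < p) (hp2 : p < 1 / 2) :
    (fun r : ℝ =>
        ∫ φ in (0:ℝ)..(2 * π),
          ‖∑' n,
            if r / Real.sqrt 2 ≤ ‖t n‖ ∧ ‖t n‖ ≤ r * Real.sqrt 2 then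
              c n / ((r : ℂ) * Complex.exp ((φ : ℂ) * Complex.I) - t n) ^ 2 else 0‖ ^ p)
      =o[atTop] fun r : ℝ => r ^ (ρ + 1 - p) := by
  have hπ : (0:ℝ) < π := Real.pi_pos
  have hsq2 : (0:ℝ) < Real.sqrt 2 := Real.sqrt_pos.2 (by norm_num)
  set f : ℕ → ℝ := fun n => 1 / ‖t n‖ ^ (ρ + 1) with hf
  have hf0 : ∀ n, 0 ≤ f n := fun n => by positivity
  -- ρ + 1 > 0
  have hρ1 : 0 < ρ + 1 := by
    by_contra hcon
    push_neg at hcon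
    have h0 : Tendsto f atTop (𝓝 0) := hρ.tendsto_atTop_zero
    have h1 : ∀ᶠ n in atTop, f n < 1 := h0.eventually_lt_const one_pos
    have h2 : ∀ᶠ n in atTop, (1:ℝ) ≤ ‖t n‖ := hlim.eventually_ge_atTop 1
    obtain ⟨n, hn1, hn2⟩ := (h1.and h2).exists
    have hple : ‖t n‖ ^ (ρ + 1) ≤ 1 :=
      Real.rpow_le_one_of_one_le_of_nonpos hn2 hcon
    have hppos : 0 < ‖t n‖ ^ (ρ + 1) :=
      Real.rpow_pos_of_pos (lt_of_lt_of_le one_pos hn2) _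
    have : (1:ℝ) ≤ f n := by
      rw [hf]
      simp only []
      rw [le_div_iff₀ hppos, one_mul]
      exact hple
    linarith
  obtain ⟨M, hM⟩ := hsup
  have hM' : ∀ n, ‖c n‖ / ‖t n‖ ≤ M := fun n => hM ⟨n, rfl⟩
  have hM0 : 0 ≤ M :=
    le_trans (div_nonneg (norm_nonneg _) (norm_nonneg _)) (hM' 0)
  set K := mteC p * (M * Real.sqrt 2) ^ p * Real.sqrt 2 ^ (ρ + 1) with hK
  have hK0 : 0 ≤ K :=
    mul_nonneg (mul_nonneg (mteC_nonneg hp2) (Real.rpow_nonneg (by positivity) _))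
      (Real.rpow_nonneg (Real.sqrt_nonneg 2) _)
  rw [Asymptotics.isLittleO_iff]
  intro ε hε
  set δ := ε / (K + 1) with hδ
  have hδ0 : 0 < δ := div_pos hε (by linarith)
  -- tail control
  have htail : ∀ᶠ N in atTop, (∑' n, f n) - ∑ n ∈ Finset.range N, f n < δ := by
    have h1 : Tendsto (fun N => ∑ n ∈ Finset.range N, f n) atTop (𝓝 (∑' n, f n)) :=
      hρ.hasSum.tendsto_sum_nat
    have h2 : Tendsto (fun N => (∑' n, f n) - ∑ n ∈ Finset.range N, f n) atTop
        (𝓝 ((∑' n, f n) - ∑' n, f n)) := tendsto_const_nhds.sub h1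
    rw [sub_self] at h2
    exact h2.eventually_lt_const hδ0
  obtain ⟨N, hN⟩ := htail.exists
  have hsum_small : ∀ s : Finset ℕ, (∀ n ∈ s, n ∉ Finset.range N) → ∑ n ∈ s, f n ≤ δ := by
    intro s hsd
    have hd : Disjoint (Finset.range N) s := by
      rw [Finset.disjoint_left]
      intro a ha has
      exact hsd a has ha
    have h1 : ∑ n ∈ Finset.range N ∪ s, f n ≤ ∑' n, f n :=
      Summable.sum_le_tsum _ (fun i _ => hf0 i) hρ
    rw [Finset.sum_union hd] at h1
    linarith
  have hev1 : ∀ᶠ r : ℝ in atTop, ∀ n ∈ Finset.range N, Real.sqrt 2 * ‖t n‖ < r := by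
    rw [eventually_all_finset]
    intro n _
    exact eventually_gt_atTop _
  filter_upwards [hev1, eventually_gt_atTop 0] with r hrN hr0
  -- the support is finite
  have hfin : {n | r / Real.sqrt 2 ≤ ‖t n‖ ∧ ‖t n‖ ≤ r * Real.sqrt 2}.Finite := by
    rcases Filter.eventually_atTop.1 (hlim.eventually_gt_atTop (r * Real.sqrt 2)) with ⟨N', hN'⟩
    apply Set.Finite.subset (Set.finite_Iio N')
    intro n hn
    rw [Set.mem_Iio]
    by_contra hge
    push_neg at hge
    exact absurd hn.2 (not_le.2 (hN' n hge))
  set S := hfin.toFinset with hS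
  have hmemS : ∀ n, n ∈ S ↔
      (r / Real.sqrt 2 ≤ ‖t n‖ ∧ ‖t n‖ ≤ r * Real.sqrt 2) := fun n =>
    hfin.mem_toFinset
  have hSdisj : ∀ n ∈ S, n ∉ Finset.range N := by
    intro n hn hmem
    have h1 := ((hmemS n).1 hn).1
    have h2 := hrN n hmem
    rw [div_le_iff₀ hsq2] at h1
    nlinarith [h1, h2]
  have htsum : ∀ φ : ℝ,
      (∑' n, if r / Real.sqrt 2 ≤ ‖t n‖ ∧ ‖t n‖ ≤ r * Real.sqrt 2 then
          c n / ((r : ℂ) * Complex.exp ((φ : ℂ) * Complex.I) - t n) ^ 2 else 0)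
        = ∑ n ∈ S, c n / ((r : ℂ) * Complex.exp ((φ : ℂ) * Complex.I) - t n) ^ 2 := by
    intro φ
    rw [tsum_eq_sum (s := S) ?_]
    · exact Finset.sum_congr rfl fun n hn => if_pos ((hmemS n).1 hn)
    · intro n hn
      exact if_neg fun hcond => hn ((hmemS n).2 hcond)
  set G : ℝ → ℝ :=
    fun φ => ∑ n ∈ S, ‖c n‖ ^ p * ‖(r : ℂ) * Complex.exp ((φ : ℂ) * Complex.I) - t n‖ ^ (-(2 * p)) with hG
  have hGint : IntegrableOn G (Set.Ioc 0 (2 * π)) volume := by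
    apply MeasureTheory.integrable_finset_sum
    intro n hn
    exact ((mte_key hp hp2 hr0 ((hmemS n).1 hn).1).1).const_mul _
  have hFG : ∀ φ : ℝ, ‖∑ n ∈ S, c n / ((r : ℂ) * Complex.exp ((φ : ℂ) * Complex.I) - t n) ^ 2‖ ^ p ≤ G φ := by
    intro φ
    calc ‖∑ n ∈ S, c n / ((r : ℂ) * Complex.exp ((φ : ℂ) * Complex.I) - t n) ^ 2‖ ^ p
        ≤ (∑ n ∈ S, ‖c n / ((r : ℂ) * Complex.exp ((φ : ℂ) * Complex.I) - t n) ^ 2‖) ^ p :=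
          Real.rpow_le_rpow (norm_nonneg _)
            (norm_sum_le _ _) hp.le
      _ ≤ ∑ n ∈ S, ‖c n / ((r : ℂ) * Complex.exp ((φ : ℂ) * Complex.I) - t n) ^ 2‖ ^ p :=
          mte_rpow_sum_le hp (by linarith) S _ (fun n => norm_nonneg _)
      _ = G φ := Finset.sum_congr rfl fun n _ => mte_term_eq _ _ hp
  -- the integral inequality
  have hXle : (∫ φ in (0:ℝ)..(2 * π),
        ‖∑' n,
          if r / Real.sqrt 2 ≤ ‖t n‖ ∧ ‖t n‖ ≤ r * Real.sqrt 2 then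
            c n / ((r : ℂ) * Complex.exp ((φ : ℂ) * Complex.I) - t n) ^ 2 else 0‖ ^ p)
      ≤ ∫ φ in Set.Ioc 0 (2 * π), G φ := by
    have hcongr : (∫ φ in (0:ℝ)..(2 * π),
          ‖∑' n,
            if r / Real.sqrt 2 ≤ ‖t n‖ ∧ ‖t n‖ ≤ r * Real.sqrt 2 then
              c n / ((r : ℂ) * Complex.exp ((φ : ℂ) * Complex.I) - t n) ^ 2 else 0‖ ^ p)
        = ∫ φ in (0:ℝ)..(2 * π), ‖∑ n ∈ S, c n / ((r : ℂ) * Complex.exp ((φ : ℂ) * Complex.I) - t n) ^ 2‖ ^ p := by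
      apply intervalIntegral.integral_congr
      intro φ _
      beta_reduce
      rw [htsum φ]
    rw [hcongr, intervalIntegral.integral_of_le (by linarith : (0:ℝ) ≤ 2 * π)]
    refine integral_mono_of_nonneg (ae_of_all _ fun φ => ?_) hGint (ae_of_all _ hFG)
    exact Real.rpow_nonneg (norm_nonneg _) _
  -- compute/bound the RHS
  have hterm : ∀ n ∈ S, ‖c n‖ ^ p
        * (∫ φ in Set.Ioc 0 (2 * π), ‖(r : ℂ) * Complex.exp ((φ : ℂ) * Complex.I) - t n‖ ^ (-(2 * p)))
      ≤ K * r ^ (ρ + 1 - p) * f n := by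
    intro n hn
    obtain ⟨ht1, ht2⟩ := (hmemS n).1 hn
    have htpos : 0 < ‖t n‖ := lt_of_lt_of_le (by positivity) ht1
    have hcn : ‖c n‖ ≤ M * (r * Real.sqrt 2) := by
      have hd := hM' n
      rw [div_le_iff₀ htpos] at hd
      calc ‖c n‖ ≤ M * ‖t n‖ := hd
        _ ≤ M * (r * Real.sqrt 2) := mul_le_mul_of_nonneg_left ht2 hM0
    have hcnp : ‖c n‖ ^ p ≤ (M * (r * Real.sqrt 2)) ^ p :=
      Real.rpow_le_rpow (norm_nonneg _) hcn hp.le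
    have hIb := (mte_key hp hp2 hr0 ht1).2
    have hInn : 0 ≤ ∫ φ in Set.Ioc 0 (2 * π), ‖(r : ℂ) * Complex.exp ((φ : ℂ) * Complex.I) - t n‖ ^ (-(2 * p)) :=
      MeasureTheory.integral_nonneg fun φ => Real.rpow_nonneg (norm_nonneg _) _
    have step1 : ‖c n‖ ^ p
          * (∫ φ in Set.Ioc 0 (2 * π), ‖(r : ℂ) * Complex.exp ((φ : ℂ) * Complex.I) - t n‖ ^ (-(2 * p)))
        ≤ (M * (r * Real.sqrt 2)) ^ p * (mteC p * r ^ (-(2 * p))) := by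
      apply mul_le_mul hcnp hIb hInn (Real.rpow_nonneg (by positivity) _)
    have hfac : 1 ≤ (r * Real.sqrt 2) ^ (ρ + 1) * f n := by
      rw [hf]
      simp only []
      rw [mul_one_div, le_div_iff₀ (Real.rpow_pos_of_pos htpos _)]
      rw [one_mul]
      exact Real.rpow_le_rpow htpos.le ht2 hρ1.le
    have step2 : (M * (r * Real.sqrt 2)) ^ p * (mteC p * r ^ (-(2 * p)))
        ≤ (M * (r * Real.sqrt 2)) ^ p * (mteC p * r ^ (-(2 * p)))
          * ((r * Real.sqrt 2) ^ (ρ + 1) * f n) := by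
      apply le_mul_of_one_le_right ?_ hfac
      exact mul_nonneg (Real.rpow_nonneg (by positivity) _)
        (mul_nonneg (mteC_nonneg hp2) (Real.rpow_nonneg hr0.le _))
    have heqK : (M * (r * Real.sqrt 2)) ^ p * (mteC p * r ^ (-(2 * p)))
          * ((r * Real.sqrt 2) ^ (ρ + 1) * f n)
        = K * r ^ (ρ + 1 - p) * f n := by
      rw [hK]
      have e1 : (M * (r * Real.sqrt 2)) ^ p = (M * Real.sqrt 2) ^ p * r ^ p := by
        rw [show M * (r * Real.sqrt 2) = (M * Real.sqrt 2) * r by ring,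
          Real.mul_rpow (by positivity) hr0.le]
      have e2 : (r * Real.sqrt 2) ^ (ρ + 1) = r ^ (ρ + 1) * Real.sqrt 2 ^ (ρ + 1) :=
        Real.mul_rpow hr0.le (Real.sqrt_nonneg 2)
      have e3 : r ^ p * r ^ (-(2 * p)) * r ^ (ρ + 1) = r ^ (ρ + 1 - p) := by
        rw [← Real.rpow_add hr0, ← Real.rpow_add hr0]
        congr 1
        ring
      calc (M * (r * Real.sqrt 2)) ^ p * (mteC p * r ^ (-(2 * p)))
            * ((r * Real.sqrt 2) ^ (ρ + 1) * f n)
          = (M * Real.sqrt 2) ^ p * mteC p * Real.sqrt 2 ^ (ρ + 1)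
            * (r ^ p * r ^ (-(2 * p)) * r ^ (ρ + 1)) * f n := by
            rw [e1, e2]; ring
        _ = mteC p * (M * Real.sqrt 2) ^ p * Real.sqrt 2 ^ (ρ + 1) * r ^ (ρ + 1 - p) * f n := by
            rw [e3]; ring
    calc ‖c n‖ ^ p
          * (∫ φ in Set.Ioc 0 (2 * π), ‖(r : ℂ) * Complex.exp ((φ : ℂ) * Complex.I) - t n‖ ^ (-(2 * p)))
        ≤ (M * (r * Real.sqrt 2)) ^ p * (mteC p * r ^ (-(2 * p))) := step1
      _ ≤ (M * (r * Real.sqrt 2)) ^ p * (mteC p * r ^ (-(2 * p)))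
          * ((r * Real.sqrt 2) ^ (ρ + 1) * f n) := step2
      _ = K * r ^ (ρ + 1 - p) * f n := heqK
  have hGval : ∫ φ in Set.Ioc 0 (2 * π), G φ
      = ∑ n ∈ S, ‖c n‖ ^ p
          * ∫ φ in Set.Ioc 0 (2 * π), ‖(r : ℂ) * Complex.exp ((φ : ℂ) * Complex.I) - t n‖ ^ (-(2 * p)) := by
    rw [hG]
    rw [MeasureTheory.integral_finset_sum _
      (fun n hn => ((mte_key hp hp2 hr0 ((hmemS n).1 hn).1).1).const_mul _)]
    exact Finset.sum_congr rfl fun n _ => MeasureTheory.integral_const_mul _ _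
  have hGle : ∫ φ in Set.Ioc 0 (2 * π), G φ ≤ K * r ^ (ρ + 1 - p) * δ := by
    rw [hGval]
    calc ∑ n ∈ S, ‖c n‖ ^ p
          * ∫ φ in Set.Ioc 0 (2 * π), ‖(r : ℂ) * Complex.exp ((φ : ℂ) * Complex.I) - t n‖ ^ (-(2 * p))
        ≤ ∑ n ∈ S, K * r ^ (ρ + 1 - p) * f n := Finset.sum_le_sum hterm
      _ = K * r ^ (ρ + 1 - p) * ∑ n ∈ S, f n := by rw [Finset.mul_sum]
      _ ≤ K * r ^ (ρ + 1 - p) * δ := by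
          apply mul_le_mul_of_nonneg_left (hsum_small S hSdisj)
          exact mul_nonneg hK0 (Real.rpow_nonneg hr0.le _)
  have hrpow0 : 0 ≤ r ^ (ρ + 1 - p) := Real.rpow_nonneg hr0.le _
  have hfinal : K * r ^ (ρ + 1 - p) * δ ≤ ε * r ^ (ρ + 1 - p) := by
    have hKδ : K * δ ≤ ε := by
      have h1 : K * δ ≤ (K + 1) * δ := mul_le_mul_of_nonneg_right (by linarith) hδ0.le
      have h2 : (K + 1) * δ = ε := by
        rw [hδ]; field_simp
      linarith
    calc K * r ^ (ρ + 1 - p) * δ = (K * δ) * r ^ (ρ + 1 - p) := by ring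
      _ ≤ ε * r ^ (ρ + 1 - p) := mul_le_mul_of_nonneg_right hKδ hrpow0
  have hX0 : 0 ≤ ∫ φ in (0:ℝ)..(2 * π),
      ‖∑' n,
        if r / Real.sqrt 2 ≤ ‖t n‖ ∧ ‖t n‖ ≤ r * Real.sqrt 2 then
          c n / ((r : ℂ) * Complex.exp ((φ : ℂ) * Complex.I) - t n) ^ 2 else 0‖ ^ p :=
    intervalIntegral.integral_nonneg (by linarith)
      (fun φ _ => Real.rpow_nonneg (norm_nonneg _) _)
  simp only [Real.norm_eq_abs]
  rw [_root_.abs_of_nonneg hX0, _root_.abs_of_nonneg hrpow0]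
  exact le_trans hXle (le_trans hGle hfinal)
end
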